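/- Let M = (L, r) be a matroid or q-matroid on a modular complemented lattice L of finite length. There exists a totally clopen element z ∈ L if and only if M is prime-free, i.e., L contains no diamond [a,b] of length 2 in which every cover [a,x] (for a < x < b) has weight 1 and every cover [x,b] has weight 0. -/

import Mathlib

section Aux

variable {L : Type*} [Lattice L] [Finite L]

lemma aux_hsm (h : L → ℕ) (hcov : ∀ a b : L, a ⋖ b → h b = h a + 1) :
    ∀ v u : L, u < v → h u < h v := by
  intro v
  induction v using WellFoundedLT.induction with
  | ind v ih =>
    intro u huv
    obtain ⟨w, huw, hwv⟩ := exists_le_covBy_of_lt huv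
    have hc := hcov w v hwv
    rcases eq_or_lt_of_le huw with rfl | hlt
    · omega
    · have := ih w hwv.lt u hlt
      omega

lemma aux_cov (h : L → ℕ) (hcov : ∀ a b : L, a ⋖ b → h b = h a + 1)
    {u v : L} (huv : u < v) (hh : h v = h u + 1) : u ⋖ v := by
  refine ⟨huv, fun w hw1 hw2 => ?_⟩
  have := aux_hsm h hcov w u hw1
  have := aux_hsm h hcov v w hw2
  omega

lemma aux_const_below (r : L → ℕ) (z : L)
    (hz : ∀ x y : L, x ⋖ y → y ≤ z → r y = r x) :
    ∀ v u : L, u ≤ v → v ≤ z → r u = r v := by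
  intro v
  induction v using WellFoundedLT.induction with
  | ind v ih =>
    intro u huv hvz
    rcases eq_or_lt_of_le huv with rfl | hlt
    · rfl
    · obtain ⟨w, huw, hwv⟩ := exists_le_covBy_of_lt hlt
      have h1 := hz w v hwv hvz
      have h2 := ih w hwv.lt u huw (hwv.le.trans hvz)
      omega

end Aux

/-- An element `z` is totally clopen for the rank function `r` if every cover above `z`
has weight `1` and every cover below `z` has weight `0`. -/
def TotallyClopen {L : Type*} [Lattice L] (r : L → ℕ) (z : L) : Prop :=
  (∀ x y : L, x ⋖ y → z ≤ x → r y = r x + 1) ∧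
  (∀ x y : L, x ⋖ y → y ≤ z → r y = r x)

/-- A prime diamond: a length-2 interval `[a,b]` in which every cover from the bottom has
weight `1` and every cover to the top has weight `0`. -/
def IsPrimeDiamond {L : Type*} [Lattice L] (h r : L → ℕ) (a b : L) : Prop :=
  a < b ∧ h b = h a + 2 ∧ ∀ x : L, a < x → x < b → (r x = r a + 1 ∧ r b = r x)

/-- A totally clopen element exists if and only if the lattice is prime-free. -/
theorem totallyClopen_exists_iff_primeFree
    {L : Type*} [Lattice L] [BoundedOrder L] [Finite L]
    [IsModularLattice L] [ComplementedLattice L]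
    (h : L → ℕ) (hbot : h ⊥ = 0) (hcov : ∀ a b : L, a ⋖ b → h b = h a + 1)
    (r : L → ℕ) (hr1 : ∀ x, r x ≤ h x) (hr2 : Monotone r)
    (hr3 : ∀ x y : L, r (x ⊔ y) + r (x ⊓ y) ≤ r x + r y)
    (hr4 : ∀ a b : L, a ⋖ b → r b = r a ∨ r b = r a + 1) :
    (∃ z : L, TotallyClopen r z) ↔ ¬∃ a b : L, IsPrimeDiamond h r a b := by
  have hsm := aux_hsm h hcov
  constructor
  · rintro ⟨z, hz1, hz2⟩ ⟨a, b, hab, hh2, hmid⟩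
    -- a middle element exists
    have hnotcov : ¬ a ⋖ b := fun hc => by have := hcov a b hc; omega
    obtain ⟨x₀, hx₀1, hx₀2⟩ := exists_lt_lt_of_not_covBy hab hnotcov
    have hrb : r b = r a + 1 := by
      obtain ⟨h1, h2⟩ := hmid x₀ hx₀1 hx₀2; omega
    -- every middle element x satisfies h x = h a + 1 and x ⋖ b
    have hmidh : ∀ x : L, a < x → x < b → h x = h a + 1 := by
      intro x h1 h2
      have := hsm x a h1
      have := hsm b x h2
      omega
    have hmidcov : ∀ x : L, a < x → x < b → x ⋖ b := by
      intro x h1 h2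
      exact aux_cov h hcov h2 (by have := hmidh x h1 h2; omega)
    -- Step 1: b ≤ z ⊔ x for every middle x
    have S1 : ∀ x : L, a < x → x < b → b ≤ z ⊔ x := by
      intro x hax hxb
      have hxcov : x ⋖ b := hmidcov x hax hxb
      by_contra hnb
      have hm : (z ⊔ x) ⊓ b = x := by
        rcases hxcov.wcovBy.eq_or_eq (le_inf le_sup_right hxb.le) inf_le_right with hh | hh
        · exact hh
        · exact absurd (hh ▸ inf_le_left) hnb
      have hmcov : (z ⊔ x) ⊓ b ⋖ b := by rw [hm]; exact hxcov
      have hcovup : z ⊔ x ⋖ z ⊔ x ⊔ b := covBy_sup_of_inf_covBy_right hmcov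
      have hup : r (z ⊔ x ⊔ b) = r (z ⊔ x) + 1 := hz1 _ _ hcovup le_sup_left
      have hsub := hr3 (z ⊔ x) b
      rw [hm, hup] at hsub
      have hrx : r b = r x := (hmid x hax hxb).2
      omega
    -- if z ⊓ b ≤ x for a middle x, contradiction
    have key : ∀ x : L, a < x → x < b → z ⊓ b ≤ x → False := by
      intro x hax hxb hzbx
      have h1 : b ≤ z ⊔ x := S1 x hax hxb
      have h2 : (x ⊔ z) ⊓ b = x ⊔ z ⊓ b := sup_inf_assoc_of_le z hxb.le
      have h3 : (x ⊔ z) ⊓ b = b := inf_eq_right.mpr (by rw [sup_comm]; exact h1)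
      have h4 : x ⊔ z ⊓ b = x := sup_eq_left.mpr hzbx
      rw [h3, h4] at h2
      exact hxb.ne' h2
    -- case analysis on n = (z ⊓ b) ⊔ a
    have hna : a ≤ (z ⊓ b) ⊔ a := le_sup_right
    have hnb : (z ⊓ b) ⊔ a ≤ b := sup_le inf_le_right hab.le
    rcases eq_or_lt_of_le hna with heq | hlt
    · exact key x₀ hx₀1 hx₀2 ((le_sup_left.trans heq.symm.le).trans hx₀1.le)
    rcases eq_or_lt_of_le hnb with heqb | hltb
    · have hsub := hr3 (z ⊓ b) a
      have hmeet : (z ⊓ b) ⊓ a = z ⊓ a := by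
        rw [inf_assoc, inf_eq_right.mpr hab.le]
      have hrr : r (z ⊓ a) = r (z ⊓ b) :=
        aux_const_below r z hz2 (z ⊓ b) (z ⊓ a) (inf_le_inf_left z hab.le) inf_le_left
      rw [heqb, hmeet, hrr] at hsub
      omega
    · exact key _ hlt hltb le_sup_left
  · intro hpf
    have h0 : r (⊥ : L) = 0 := Nat.le_zero.mp (hbot ▸ hr1 ⊥)
    obtain ⟨z, hz0, hzmax⟩ :=
      Set.Finite.exists_maximalFor id {w : L | r w = 0} (Set.toFinite _) ⟨⊥, h0⟩
    simp only [Set.mem_setOf_eq, id] at hz0 hzmax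
    have descent : ∀ n : ℕ, ∀ x y : L, h x = n → z ≤ x → x ⋖ y → r y = r x → False := by
      intro n
      induction n using Nat.strong_induction_on with
      | _ n ih =>
        intro x y hhx hzx hxy hrxy
        rcases eq_or_lt_of_le hzx with rfl | hlt
        · have hy0 : r y = 0 := by rw [hrxy, hz0]
          exact absurd (hzmax hy0 hxy.le) (not_le_of_gt hxy.lt)
        · obtain ⟨x', hzx', hx'x⟩ := exists_le_covBy_of_lt hlt
          have hy : h y = h x + 1 := hcov _ _ hxy
          have hx : h x = h x' + 1 := hcov _ _ hx'x
          by_cases hex : ∃ w : L, x' < w ∧ w < y ∧ r w = r x'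
          · obtain ⟨w, hw1, hw2, hw3⟩ := hex
            have hww : h w = h x' + 1 := by
              have := hsm w x' hw1
              have := hsm y w hw2
              omega
            exact ih (h x') (by omega) x' w rfl hzx' (aux_cov h hcov hw1 hww) hw3
          · push_neg at hex
            apply hpf
            refine ⟨x', y, hx'x.lt.trans hxy.lt, by omega, ?_⟩
            have hrx : r x = r x' + 1 :=
              (hr4 _ _ hx'x).resolve_left (hex x hx'x.lt hxy.lt)
            intro w hw1 hw2
            have hww : h w = h x' + 1 := by
              have := hsm w x' hw1
              have := hsm y w hw2
              omega
            have hcw : x' ⋖ w := aux_cov h hcov hw1 hww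
            have hrw : r w = r x' + 1 := (hr4 _ _ hcw).resolve_left (hex w hw1 hw2)
            exact ⟨hrw, by omega⟩
    refine ⟨z, fun x y hxy hzx => ?_, fun x y hxy hyz => ?_⟩
    · rcases hr4 x y hxy with he | h1
      · exact absurd he (fun he => descent (h x) x y rfl hzx hxy he)
      · exact h1
    · have hx0 : r x = 0 := Nat.le_zero.mp (hz0 ▸ hr2 (hxy.le.trans hyz))
      have hy0 : r y = 0 := Nat.le_zero.mp (hz0 ▸ hr2 hyz)
      omega
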